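/- arXiv:0906.0377 — 2 statements merged into one kernel-verified Lean document; each statement's English description precedes it below -/
import Mathlib

section
/- Let r ∈ [n] and let σ be a word consisting of the n−1 elements of [n]\{r} in some order. Then the major increment sequence MIS(σ,r) = (mi(σ,1,r), ..., mi(σ,n,r)) is a permutation of the set {0, 1, ..., n−1}; that is, the n values mi(σ,k,r) for k = 1,...,n are pairwise distinct and are exactly the integers 0 through n−1. -/
open Polynomial

/-- The word (1, 2, ..., n) as a list of integers. -/
def W (n : ℕ) : List ℤ := (List.range n).map (fun i => (i : ℤ) + 1)

/-- Descent set of a word: 1-based indices i ∈ {1,...,m-1} with w(i) > w(i+1). -/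
def descSet (w : List ℤ) : Finset ℕ :=
  (Finset.Icc 1 (w.length - 1)).filter (fun i => w.getD (i - 1) 0 > w.getD i 0)

/-- Major index of a word: the sum of its descents. -/
def maj (w : List ℤ) : ℕ := ∑ i ∈ descSet w, i

/-- `dstat w k` is the number of descents of `w` that are ≥ k. -/
def dstat (w : List ℤ) (k : ℕ) : ℕ := ((descSet w).filter (fun i => k ≤ i)).card

/-- Major increment: the change in major index when `r` is inserted into `w`
at (1-based) position `k`. -/
def mi (w : List ℤ) (k : ℕ) (r : ℤ) : ℤ := (maj (w.insertIdx (k - 1) r) : ℤ) - (maj w : ℤ)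

/-- The q-factorial [m]_q! = ∏_{i=1}^m (1 + q + ... + q^{i-1}), as a polynomial in q. -/
noncomputable def qFact (m : ℕ) : Polynomial ℚ :=
  ∏ i ∈ Finset.range m, ∑ j ∈ Finset.range (i + 1), (X : Polynomial ℚ) ^ j

/-- The q-binomial coefficient [n choose a]_q = [n]_q!/([a]_q!·[n−a]_q!). -/
noncomputable def qBinom (n a : ℕ) : Polynomial ℚ := qFact n / (qFact a * qFact (n - a))

/-- The set of all shuffles of two words `θ` and `π` (words containing `θ` and `π`
as complementary subwords). -/
def shuffles (θ π : List ℤ) : Finset (List ℤ) :=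
  (θ ++ π).permutations.toFinset.filter (fun σ => θ.Sublist σ ∧ π.Sublist σ)

lemma mem_descSet {w : List ℤ} {i : ℕ} :
    i ∈ descSet w ↔ 1 ≤ i ∧ i ≤ w.length - 1 ∧ w.getD (i - 1) 0 > w.getD i 0 := by
  simp [descSet, Finset.mem_filter, Finset.mem_Icc, and_assoc]

lemma maj_nil : maj ([] : List ℤ) = 0 := by
  simp [maj, descSet]

lemma maj_singleton (x : ℤ) : maj [x] = 0 := by
  simp [maj, descSet]

lemma mem_descSet_snoc {w : List ℤ} {x : ℤ} (hw : w ≠ []) {i : ℕ} :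
    i ∈ descSet (w ++ [x]) ↔
      i ∈ descSet w ∨ (i = w.length ∧ w.getD (w.length - 1) 0 > x) := by
  have hl : 1 ≤ w.length := List.length_pos_iff.mpr hw
  rw [mem_descSet, mem_descSet]
  simp only [List.length_append, List.length_singleton]
  constructor
  · rintro ⟨h1, h2, h3⟩
    rcases lt_or_eq_of_le (show i ≤ w.length by omega) with hlt | he
    · left
      refine ⟨h1, by omega, ?_⟩
      rwa [List.getD_append _ _ _ _ (by omega), List.getD_append _ _ _ _ (by omega)] at h3
    · right
      refine ⟨he, ?_⟩
      rw [he, List.getD_append _ _ _ _ (by omega),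
        List.getD_append_right _ _ _ _ (by omega)] at h3
      simpa using h3
  · rintro (⟨h1, h2, h3⟩ | ⟨rfl, h3⟩)
    · refine ⟨h1, by omega, ?_⟩
      rwa [List.getD_append _ _ _ _ (by omega), List.getD_append _ _ _ _ (by omega)]
    · refine ⟨by omega, by omega, ?_⟩
      rw [List.getD_append _ _ _ _ (by omega), List.getD_append_right _ _ _ _ (by omega)]
      simpa using h3

lemma descSet_snoc (w : List ℤ) (x : ℤ) (hw : w ≠ []) :
    descSet (w ++ [x]) =
      if w.getD (w.length - 1) 0 > x then insert w.length (descSet w) else descSet w := by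
  have hl : 1 ≤ w.length := List.length_pos_iff.mpr hw
  ext i
  rw [mem_descSet_snoc hw]
  split
  · next h =>
    simp only [Finset.mem_insert]
    constructor
    · rintro (h1 | ⟨rfl, _⟩); exacts [Or.inr h1, Or.inl rfl]
    · rintro (rfl | h1); exacts [Or.inr ⟨rfl, h⟩, Or.inl h1]
  · next h =>
    constructor
    · rintro (h1 | ⟨rfl, h2⟩); exacts [h1, absurd h2 h]
    · exact Or.inl

lemma length_not_mem_descSet (w : List ℤ) : w.length ∉ descSet w := by
  intro h
  have := mem_descSet.mp h
  omega

lemma maj_snoc (w : List ℤ) (x : ℤ) (hw : w ≠ []) :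
    maj (w ++ [x]) = maj w + if w.getD (w.length - 1) 0 > x then w.length else 0 := by
  rw [maj, descSet_snoc w x hw]
  split
  · rw [Finset.sum_insert (length_not_mem_descSet w), maj, Nat.add_comm]
  · rw [maj, Nat.add_zero]

lemma insertIdx_snoc (w : List ℤ) (x r : ℤ) (j : ℕ) (h : j ≤ w.length) :
    (w ++ [x]).insertIdx j r = (w.insertIdx j r) ++ [x] := by
  induction w generalizing j with
  | nil =>
    have : j = 0 := by simpa using h
    subst this
    simp
  | cons a t ih =>
    cases j with
    | zero => simp
    | succ j =>
      simp only [List.cons_append, List.insertIdx_succ_cons]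
      rw [ih j (by simpa using h)]

lemma getD_last_insertIdx (w : List ℤ) (r : ℤ) (j : ℕ) (h : j < w.length) :
    (w.insertIdx j r).getD w.length 0 = w.getD (w.length - 1) 0 := by
  induction w generalizing j with
  | nil => simp at h
  | cons a t ih =>
    cases j with
    | zero => simp [List.getD_cons_succ]
    | succ j =>
      have h' : j < t.length := by simpa using h
      have hl : 1 ≤ t.length := by omega
      obtain ⟨L, hL⟩ : ∃ L, t.length = L + 1 := ⟨t.length - 1, by omega⟩
      simp only [List.insertIdx_succ_cons, List.length_cons, List.getD_cons_succ,
        Nat.add_sub_cancel]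
      rw [ih j h', hL]
      simp [List.getD_cons_succ]

lemma insertIdx_ne_nil (w : List ℤ) (r : ℤ) (j : ℕ) (hw : w ≠ []) :
    w.insertIdx j r ≠ [] := by
  intro h
  have h1 := @List.length_le_length_insertIdx _ w r j
  have h2 : 0 < w.length := List.length_pos_iff.mpr hw
  rw [h] at h1
  simp only [List.length_nil, Nat.le_zero] at h1
  omega

lemma mi_snoc_lt (w : List ℤ) (x r : ℤ) (k : ℕ) (hw : w ≠ []) (h1 : 1 ≤ k)
    (h2 : k ≤ w.length) :
    mi (w ++ [x]) k r = mi w k r + (if w.getD (w.length - 1) 0 > x then 1 else 0) := by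
  have hj : k - 1 ≤ w.length := by omega
  have hj' : k - 1 < w.length := by omega
  have hlen : (w.insertIdx (k - 1) r).length = w.length + 1 :=
    List.length_insertIdx_of_le_length hj _
  unfold mi
  rw [insertIdx_snoc w x r (k - 1) hj, maj_snoc w x hw,
    maj_snoc (w.insertIdx (k - 1) r) x (insertIdx_ne_nil w r _ hw), hlen]
  rw [show w.length + 1 - 1 = w.length from rfl, getD_last_insertIdx w r (k - 1) hj']
  split <;> push_cast <;> ring

lemma maj_snoc_end (w : List ℤ) (r : ℤ) (hw : w ≠ []) :
    maj (w ++ [r]) = maj w + if w.getD (w.length - 1) 0 > r then w.length else 0 :=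
  maj_snoc w r hw

lemma mi_snoc_mid (w : List ℤ) (x r : ℤ) (hw : w ≠ []) :
    mi (w ++ [x]) (w.length + 1) r =
      (if w.getD (w.length - 1) 0 > r then (w.length : ℤ) else 0) +
        (if r > x then (w.length : ℤ) + 1 else 0) -
      (if w.getD (w.length - 1) 0 > x then (w.length : ℤ) else 0) := by
  have h1 : (w ++ [x]).insertIdx (w.length + 1 - 1) r = (w ++ [r]) ++ [x] := by
    rw [show w.length + 1 - 1 = w.length from rfl, insertIdx_snoc w x r w.length le_rfl,
      List.insertIdx_length_self]
  have h2 : (w ++ [r]).getD ((w ++ [r]).length - 1) 0 = r := by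
    rw [List.length_append, List.length_singleton, Nat.add_sub_cancel,
      List.getD_append_right _ _ _ _ le_rfl]
    simp
  unfold mi
  rw [h1, maj_snoc (w ++ [r]) x (by simp), h2, maj_snoc w r hw, maj_snoc w x hw,
    List.length_append, List.length_singleton]
  split <;> split <;> split <;> push_cast <;> ring

lemma mi_snoc_end (w : List ℤ) (x r : ℤ) :
    mi (w ++ [x]) (w.length + 2) r =
      if x > r then (w.length : ℤ) + 1 else 0 := by
  have h1 : (w ++ [x]).insertIdx (w.length + 2 - 1) r = (w ++ [x]) ++ [r] := by
    rw [show w.length + 2 - 1 = (w ++ [x]).length by simp, List.insertIdx_length_self]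
  have h2 : (w ++ [x]).getD ((w ++ [x]).length - 1) 0 = x := by
    rw [List.length_append, List.length_singleton, Nat.add_sub_cancel,
      List.getD_append_right _ _ _ _ le_rfl]
    simp
  unfold mi
  rw [h1, maj_snoc (w ++ [x]) r (by simp), h2, List.length_append, List.length_singleton]
  split <;> push_cast <;> ring

lemma mi_end (w : List ℤ) (r : ℤ) (hw : w ≠ []) :
    mi w (w.length + 1) r = if w.getD (w.length - 1) 0 > r then (w.length : ℤ) else 0 := by
  unfold mi
  rw [show w.length + 1 - 1 = w.length from rfl, List.insertIdx_length_self,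
    maj_snoc w r hw]
  split <;> push_cast <;> ring

/-- `CR m` is the multiset `{0, 1, ..., m-1}` of integers. -/
def CR (m : ℕ) : Multiset ℤ := (Multiset.range m).map (fun j : ℕ => (j : ℤ))

/-- `CRS m a` is the multiset `{a, a+1, ..., a+m-1}` of integers. -/
def CRS (m : ℕ) (a : ℤ) : Multiset ℤ := (Multiset.range m).map (fun j : ℕ => (j : ℤ) + a)

lemma CR_eq (m : ℕ) : CR m = CRS m 0 :=
  Multiset.map_congr rfl (fun j _ => by ring)

lemma CRS_top (m : ℕ) (a : ℤ) : CRS (m + 1) a = ((m : ℤ) + a) ::ₘ CRS m a := by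
  unfold CRS
  rw [Multiset.range_succ, Multiset.map_cons]

lemma CRS_bot (m : ℕ) (a : ℤ) : CRS (m + 1) a = a ::ₘ CRS m (a + 1) := by
  unfold CRS
  rw [show m + 1 = 1 + m by omega, Multiset.range_add, Multiset.map_add, Multiset.map_map]
  have h1 : (Multiset.range 1).map (fun j : ℕ => (j : ℤ) + a) = {a} := by
    rw [show Multiset.range 1 = {0} from rfl]
    simp
  rw [h1, Multiset.singleton_add]
  congr 1
  refine Multiset.map_congr rfl (fun j _ => ?_)
  simp only [Function.comp]
  push_cast
  ring

lemma CRS_map_add (m : ℕ) (a b : ℤ) :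
    (CRS m a).map (fun v => v + b) = CRS m (a + b) := by
  unfold CRS
  rw [Multiset.map_map]
  exact Multiset.map_congr rfl (fun j _ => by simp only [Function.comp]; ring)

lemma finalA (m : ℕ) :
    (0 : ℤ) ::ₘ ((m : ℤ) + 1) ::ₘ CRS m 1 = ((m + 1 : ℕ) : ℤ) ::ₘ ((m : ℕ) : ℤ) ::ₘ CR m := by
  have : ((m + 1 : ℕ) : ℤ) ::ₘ ((m : ℕ) : ℤ) ::ₘ CR m = CRS (m + 2) 0 := by
    rw [CR_eq, show m + 2 = (m + 1) + 1 from rfl, CRS_top, CRS_top]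
    congr 2 <;> push_cast <;> ring
  rw [this, show m + 2 = (m + 1) + 1 from rfl, CRS_bot, show (0 : ℤ) + 1 = 1 by ring,
    CRS_top]

lemma finalB (m : ℕ) :
    (0 : ℤ) ::ₘ (1 : ℤ) ::ₘ CRS m 2 = ((m + 1 : ℕ) : ℤ) ::ₘ ((m : ℕ) : ℤ) ::ₘ CR m := by
  have : ((m + 1 : ℕ) : ℤ) ::ₘ ((m : ℕ) : ℤ) ::ₘ CR m = CRS (m + 2) 0 := by
    rw [CR_eq, show m + 2 = (m + 1) + 1 from rfl, CRS_top, CRS_top]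
    congr 2 <;> push_cast <;> ring
  rw [this, show m + 2 = (m + 1) + 1 from rfl, CRS_bot, show (0 : ℤ) + 1 = 1 by ring,
    CRS_bot, show (1 : ℤ) + 1 = 2 by ring]

lemma finalC (m : ℕ) :
    ((m : ℤ) + 1) ::ₘ (0 : ℤ) ::ₘ CRS m 1 = ((m + 1 : ℕ) : ℤ) ::ₘ ((m : ℕ) : ℤ) ::ₘ CR m := by
  rw [Multiset.cons_swap]
  exact finalA m

lemma key (σ : List ℤ) (r : ℤ) (h : r ∉ σ) :
    (Multiset.range (σ.length + 1)).map (fun k => mi σ (k + 1) r) =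
      (Multiset.range (σ.length + 1)).map (fun j : ℕ => (j : ℤ)) := by
  induction σ using List.reverseRecOn with
  | nil =>
    have h0 : mi [] (0 + 1) r = 0 := by
      unfold mi
      simp [maj_singleton, maj_nil]
    simp [Multiset.range_succ, h0]
  | append_singleton w x ih =>
    simp only [List.mem_append, List.mem_singleton, not_or] at h
    obtain ⟨hrw, hrx⟩ := h
    rcases eq_or_ne w [] with rfl | hw
    · -- σ = [x]
      simp only [List.nil_append, List.length_singleton]
      have e2 : mi [x] (1 + 1) r = if x > r then (1 : ℤ) else 0 := by
        have := mi_snoc_end ([] : List ℤ) x r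
        simpa using this
      have e1 : mi [x] (0 + 1) r = if r > x then (1 : ℤ) else 0 := by
        show (maj ([x].insertIdx (1 - 1) r) : ℤ) - (maj [x] : ℤ) = _
        have : [x].insertIdx (1 - 1) r = [r] ++ [x] := rfl
        rw [this, maj_snoc [r] x (by simp), maj_singleton, maj_singleton]
        simp only [List.length_singleton]
        split <;> split <;> first | rfl | (exfalso; simp_all)
      rw [Multiset.range_succ, Multiset.range_succ, Multiset.range_zero,
        Multiset.map_cons, Multiset.map_cons, Multiset.map_zero,
        Multiset.map_cons, Multiset.map_cons, Multiset.map_zero, e2, e1]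
      rcases lt_or_gt_of_ne hrx with hlt | hgt
      · rw [if_pos hlt, if_neg (show ¬ r > x by omega)]
        push_cast
        rfl
      · rw [if_neg (show ¬ x > r by omega), if_pos hgt]
        push_cast
        exact Multiset.cons_swap _ _ _
    · -- w ≠ []
      have hm1 : 1 ≤ w.length := List.length_pos_iff.mpr hw
      set m := w.length with hm
      set c := w.getD (m - 1) 0 with hc
      have hlen : (w ++ [x]).length = m + 1 := by simp [hm]
      have IH := ih hrw
      rw [Multiset.range_succ, Multiset.map_cons, Multiset.map_cons] at IH
      set M := (Multiset.range m).map (fun k => mi w (k + 1) r) with hM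
      rw [show (Multiset.range m).map (fun j : ℕ => (j : ℤ)) = CR m from rfl] at IH
      rw [hlen]
      have hA : ∀ k ∈ Multiset.range m,
          mi (w ++ [x]) (k + 1) r = mi w (k + 1) r + (if c > x then 1 else 0) := by
        intro k hk
        rw [Multiset.mem_range] at hk
        exact mi_snoc_lt w x r (k + 1) hw (by omega) (by omega)
      have e2 : mi (w ++ [x]) (m + 1 + 1) r = if x > r then (m : ℤ) + 1 else 0 :=
        mi_snoc_end w x r
      have e1 : mi (w ++ [x]) (m + 1) r =
          (if c > r then (m : ℤ) else 0) + (if r > x then (m : ℤ) + 1 else 0) -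
            (if c > x then (m : ℤ) else 0) :=
        mi_snoc_mid w x r hw
      have eD : mi w (m + 1) r = if c > r then (m : ℤ) else 0 := mi_end w r hw
      rw [Multiset.range_succ, Multiset.range_succ, Multiset.map_cons, Multiset.map_cons,
        Multiset.map_cons, Multiset.map_cons, Multiset.map_congr rfl hA, e2, e1]
      rw [show (Multiset.range m).map (fun j : ℕ => (j : ℤ)) = CR m from rfl]
      rw [eD] at IH
      by_cases hcx : c > x
      · have hmap : (Multiset.range m).map
            (fun k => mi w (k + 1) r + if c > x then 1 else 0) = M.map (fun v => v + 1) := by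
          rw [hM, Multiset.map_map]
          exact Multiset.map_congr rfl (fun k _ => by simp [hcx])
        rw [hmap, if_pos hcx]
        by_cases hrx2 : r > x
        · rw [if_pos hrx2, if_neg (show ¬ x > r by omega)]
          by_cases hcr : c > r
          · rw [if_pos hcr]
            rw [if_pos hcr] at IH
            have hMeq : M = CR m := (Multiset.cons_inj_right _).mp IH
            rw [hMeq, CR_eq, CRS_map_add, show (0 : ℤ) + 1 = 1 by ring,
              show (m : ℤ) + ((m : ℤ) + 1) - (m : ℤ) = (m : ℤ) + 1 by ring]
            exact finalA m
          · rw [if_neg hcr]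
            rw [if_neg hcr] at IH
            have hIH' : (0 : ℤ) ::ₘ M = ((m : ℕ) : ℤ) ::ₘ CR m := IH
            have hCR : ((m : ℕ) : ℤ) ::ₘ CR m = 0 ::ₘ CRS m 1 := by
              rw [CR_eq, show ((m : ℕ) : ℤ) = (m : ℤ) + 0 by ring, ← CRS_top, CRS_bot,
                show (0 : ℤ) + 1 = 1 by norm_num]
            rw [hCR] at hIH'
            have hMeq : M = CRS m 1 := (Multiset.cons_inj_right _).mp hIH'
            rw [hMeq, CRS_map_add, show (1 : ℤ) + 1 = 2 by ring,
              show (0 : ℤ) + ((m : ℤ) + 1) - (m : ℤ) = 1 by ring]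
            exact finalB m
        · have hxr : x > r := lt_of_le_of_ne (not_lt.mp hrx2) hrx
          have hcr : c > r := lt_trans hxr hcx
          rw [if_pos hxr, if_neg (show ¬ r > x by omega), if_pos hcr]
          rw [if_pos hcr] at IH
          have hMeq : M = CR m := (Multiset.cons_inj_right _).mp IH
          rw [hMeq, CR_eq, CRS_map_add, show (0 : ℤ) + 1 = 1 by ring,
            show (m : ℤ) + 0 - (m : ℤ) = 0 by ring]
          exact finalC m
      · have hmap : (Multiset.range m).map
            (fun k => mi w (k + 1) r + if c > x then 1 else 0) = M := by
          rw [hM]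
          exact Multiset.map_congr rfl (fun k _ => by simp [hcx])
        rw [hmap, if_neg hcx]
        by_cases hrx2 : r > x
        · have hcr : ¬ c > r := by omega
          rw [if_pos hrx2, if_neg (show ¬ x > r by omega), if_neg hcr]
          rw [if_neg hcr] at IH
          have hIH' : (0 : ℤ) ::ₘ M = ((m : ℕ) : ℤ) ::ₘ CR m := IH
          have hCR : ((m : ℕ) : ℤ) ::ₘ CR m = 0 ::ₘ CRS m 1 := by
            rw [CR_eq, show ((m : ℕ) : ℤ) = (m : ℤ) + 0 by ring, ← CRS_top, CRS_bot,
              show (0 : ℤ) + 1 = 1 by norm_num]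
          rw [hCR] at hIH'
          have hMeq : M = CRS m 1 := (Multiset.cons_inj_right _).mp hIH'
          rw [hMeq, show (0 : ℤ) + ((m : ℤ) + 1) - 0 = (m : ℤ) + 1 by ring]
          exact finalA m
        · have hxr : x > r := lt_of_le_of_ne (not_lt.mp hrx2) hrx
          rw [if_pos hxr, if_neg (show ¬ r > x by omega)]
          rw [show ((if c > r then (m : ℤ) else 0) + 0 - 0) = (if c > r then (m : ℤ) else 0)
            by ring, ← IH]
          congr 1

lemma W_eq (n : ℕ) : W n = (List.range n).map (fun i : ℕ => (i : ℤ) + 1) := by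
  unfold W
  induction n with
  | zero => rfl
  | succ k ih =>
    rw [List.range_succ]
    simp only [List.bind_eq_flatMap, List.flatMap_append, List.map_append, List.flatMap_cons,
      List.flatMap_nil, List.map_cons] at *
    rw [ih]
    rfl

/-- Proposition 3.1: if r ∈ [n] and σ is a word on [n]\{r}, then the major increment
sequence MIS(σ,r) = (mi(σ,1,r),...,mi(σ,n,r)) is a permutation of {0,1,...,n-1}:
the n values are pairwise distinct and are exactly the integers 0 through n-1. -/
theorem mis_perm (n : ℕ) (r : ℤ) (hr : r ∈ W n) (σ : List ℤ)
    (hσ : σ.Perm ((W n).erase r)) :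
    Set.InjOn (fun k => mi σ k r) (Set.Icc 1 n) ∧
      (Finset.Icc 1 n).image (fun k => mi σ k r) =
        (Finset.range n).image (fun j => ((j : ℕ) : ℤ)) := by
  have hW : (W n).Nodup := by
    rw [W_eq]
    refine List.Nodup.map ?_ List.nodup_range
    intro a b hab
    have hab' : (a : ℤ) + 1 = (b : ℤ) + 1 := hab
    have : (a : ℤ) = (b : ℤ) := by linarith
    exact_mod_cast this
  have hlenW : (W n).length = n := by
    rw [W_eq, List.length_map, List.length_range]
  have hn : 0 < n := by
    have := List.ne_nil_of_mem hr
    have := List.length_pos_iff.mpr this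
    omega
  have hlen : σ.length = n - 1 := by
    have h1 := hσ.length_eq
    have h2 : ((W n).erase r).length + 1 = (W n).length := List.length_erase_add_one hr
    omega
  have hs : σ.length + 1 = n := by omega
  have hrs : r ∉ σ := by
    intro hmem
    have h1 : r ∈ (W n).erase r := hσ.mem_iff.mp hmem
    have h2 : r ∈ (↑(W n) : Multiset ℤ).erase r := by
      rw [Multiset.coe_erase]
      exact Multiset.mem_coe.mpr h1
    have h3 : (↑(W n) : Multiset ℤ).Nodup := hW
    exact ((Multiset.Nodup.mem_erase_iff h3).mp h2).1 rfl
  have hkey := key σ r hrs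
  rw [hs] at hkey
  have himg : (Finset.Icc 1 n).image (fun k => mi σ k r) =
      (Finset.range n).image (fun j => ((j : ℕ) : ℤ)) := by
    have hIcc : Finset.Icc 1 n = (Finset.range n).image (fun k => k + 1) := by
      ext a
      simp only [Finset.mem_Icc, Finset.mem_range, Finset.mem_image]
      constructor
      · intro h
        exact ⟨a - 1, by omega, by omega⟩
      · rintro ⟨b, hb, rfl⟩
        omega
    rw [hIcc, Finset.image_image]
    apply Finset.eq_of_veq
    rw [Finset.image_val, Finset.image_val, Finset.range_val]
    have hcomp : (Multiset.range n).map ((fun k => mi σ k r) ∘ (fun k => k + 1)) =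
        (Multiset.range n).map (fun j : ℕ => (j : ℤ)) := by
      rw [← hkey]
      exact Multiset.map_congr rfl (fun k _ => rfl)
    rw [hcomp]
  refine ⟨?_, himg⟩
  have hcast : Function.Injective (fun j : ℕ => ((j : ℕ) : ℤ)) := by
    intro a b hab
    have h : (a : ℤ) = (b : ℤ) := hab
    exact_mod_cast h
  have hcard : ((Finset.Icc 1 n).image (fun k => mi σ k r)).card = (Finset.Icc 1 n).card := by
    rw [himg, Finset.card_image_of_injective _ hcast, Finset.card_range, Nat.card_Icc]
    omega
  have hinj := Finset.injOn_of_card_image_eq hcard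
  rwa [Finset.coe_Icc] at hinj
end

section
/- Let σ be a word of n−1 distinct integers and let r be an integer greater than every letter of σ. Then for every k with 1 ≤ k ≤ n−1, the set of the first k entries of MIS(σ,r), i.e., {mi(σ,1,r), ..., mi(σ,k,r)}, equals the integer interval {d_k(σ)+1, d_k(σ)+2, ..., d_k(σ)+k}. -/
open Polynomial

lemma getD_ins_lt (l : List ℤ) (r : ℤ) (p q : ℕ) (hq : q < p) (hp : p ≤ l.length) :
    (l.insertIdx p r).getD q 0 = l.getD q 0 := by
  have h1 : q < l.length := lt_of_lt_of_le hq hp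
  have h2 : q < (l.insertIdx p r).length := by
    rw [List.length_insertIdx_of_le_length hp]; omega
  rw [List.getD_eq_getElem _ 0 h1, List.getD_eq_getElem _ 0 h2,
    List.getElem_insertIdx_of_lt hq h2]

lemma getD_ins_self (l : List ℤ) (r : ℤ) (p : ℕ) (hp : p ≤ l.length) :
    (l.insertIdx p r).getD p 0 = r := by
  have h2 : p < (l.insertIdx p r).length := by
    rw [List.length_insertIdx_of_le_length hp]; omega
  rw [List.getD_eq_getElem _ 0 h2, List.getElem_insertIdx_self h2]

lemma getD_ins_gt (l : List ℤ) (r : ℤ) (p q : ℕ) (hq : p < q) (hql : q ≤ l.length) :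
    (l.insertIdx p r).getD q 0 = l.getD (q - 1) 0 := by
  have hp : p ≤ l.length := by omega
  have h1 : q - 1 < l.length := by omega
  have h2 : q < (l.insertIdx p r).length := by
    rw [List.length_insertIdx_of_le_length hp]; omega
  rw [List.getD_eq_getElem _ 0 h1, List.getD_eq_getElem _ 0 h2]
  have := List.getElem_insertIdx_add_succ l r p (q - 1 - p) (by omega)
    (by rw [List.length_insertIdx_of_le_length hp]; omega)
  convert this using 2 <;> omega

lemma getD_mem (l : List ℤ) (q : ℕ) (hq : q < l.length) : l.getD q 0 ∈ l := by
  rw [List.getD_eq_getElem _ 0 hq]; exact List.getElem_mem hq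

lemma descSet_insertIdx (σ : List ℤ) (r : ℤ) (hr : ∀ x ∈ σ, x < r) (p : ℕ)
    (hp : p + 1 ≤ σ.length) :
    descSet (σ.insertIdx p r) =
      ((descSet σ).filter (fun i => i < p) ∪ {p + 1}) ∪
        ((descSet σ).filter (fun i => p + 1 ≤ i)).image (fun i => i + 1) := by
  have hp' : p ≤ σ.length := by omega
  have hlen : (σ.insertIdx p r).length = σ.length + 1 := List.length_insertIdx_of_le_length hp' r
  ext i
  simp only [descSet, Finset.mem_union, Finset.mem_filter, Finset.mem_Icc, Finset.mem_image,
    Finset.mem_singleton, hlen]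
  constructor
  · rintro ⟨⟨hi1, hi2⟩, hd⟩
    have hi2' : i ≤ σ.length := by omega
    rcases lt_trichotomy i p with h | h | h
    · left; left
      rw [getD_ins_lt σ r p (i-1) (by omega) hp', getD_ins_lt σ r p i h hp'] at hd
      exact ⟨⟨⟨hi1, by omega⟩, hd⟩, h⟩
    · exfalso
      have h1 : 1 ≤ p := by omega
      rw [show i = p from h] at hd
      rw [getD_ins_lt σ r p (p-1) (by omega) hp', getD_ins_self σ r p hp'] at hd
      exact absurd (hr _ (getD_mem σ (p-1) (by omega))) (not_lt.mpr (le_of_lt hd))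
    · rcases eq_or_lt_of_le (show p + 1 ≤ i by omega) with h2 | h2
      · left; right; omega
      · right
        refine ⟨i - 1, ⟨⟨⟨by omega, by omega⟩, ?_⟩, by omega⟩, by omega⟩
        rw [getD_ins_gt σ r p (i-1) (by omega) (by omega),
          getD_ins_gt σ r p i (by omega) hi2'] at hd
        convert hd using 3
  · rintro ((⟨⟨⟨hi1, hi2⟩, hd⟩, hip⟩ | rfl) | ⟨a, ⟨⟨⟨ha1, ha2⟩, hd⟩, hap⟩, rfl⟩)
    · refine ⟨⟨hi1, by omega⟩, ?_⟩
      rw [getD_ins_lt σ r p (i-1) (by omega) hp', getD_ins_lt σ r p i hip hp']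
      exact hd
    · refine ⟨⟨by omega, by omega⟩, ?_⟩
      rw [show p + 1 - 1 = p from rfl, getD_ins_self σ r p hp',
        getD_ins_gt σ r p (p+1) (by omega) hp]
      exact hr _ (getD_mem σ (p+1-1) (by omega))
    · refine ⟨⟨by omega, by omega⟩, ?_⟩
      rw [getD_ins_gt σ r p (a+1-1) (by omega) (by omega),
        getD_ins_gt σ r p (a+1) (by omega) (by omega)]
      convert hd using 3 <;> omega
lemma mi_formula (σ : List ℤ) (r : ℤ) (hr : ∀ x ∈ σ, x < r) (p : ℕ) (hp : p + 1 ≤ σ.length) :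
    mi σ (p + 1) r =
      (p + 1 : ℤ) + (dstat σ (p + 1) : ℤ) - (if p ∈ descSet σ then (p : ℤ) else 0) := by
  have hD := descSet_insertIdx σ r hr p hp
  set A := (descSet σ).filter (fun i => i < p) with hA
  set F := (descSet σ).filter (fun i => p + 1 ≤ i) with hF
  have hdisj1 : Disjoint A ({p+1} : Finset ℕ) := by
    rw [Finset.disjoint_left]
    intro a ha hb
    simp only [hA, Finset.mem_filter] at ha
    simp only [Finset.mem_singleton] at hb
    omega
  have hdisj2 : Disjoint (A ∪ {p+1}) (F.image (fun i => i+1)) := by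
    rw [Finset.disjoint_left]
    intro a ha hb
    simp only [hF, Finset.mem_image, Finset.mem_filter] at hb
    simp only [hA, Finset.mem_union, Finset.mem_filter, Finset.mem_singleton] at ha
    rcases hb with ⟨x, ⟨hx, hxp⟩, rfl⟩
    rcases ha with ⟨_, h⟩ | h <;> omega
  have hmajw : maj (σ.insertIdx p r) = (∑ i ∈ A, i + (p+1)) + (∑ i ∈ F, i + F.card) := by
    rw [maj, hD, Finset.sum_union hdisj2, Finset.sum_union hdisj1,
      Finset.sum_image (by intro x _ y _ h; simp only at h; omega)]
    simp [Finset.sum_add_distrib]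
  have hmajσ : maj σ = ∑ i ∈ A, i + ((if p ∈ descSet σ then p else 0) + ∑ i ∈ F, i) := by
    rw [maj, ← Finset.sum_filter_add_sum_filter_not (descSet σ) (fun i => i < p)]
    congr 1
    by_cases h : p ∈ descSet σ
    · have he : (descSet σ).filter (fun i => ¬ i < p) = insert p F := by
        ext a
        simp only [hF, Finset.mem_insert, Finset.mem_filter, not_lt]
        constructor
        · rintro ⟨ha, h2⟩
          rcases eq_or_lt_of_le h2 with h3 | h3
          · exact Or.inl h3.symm
          · exact Or.inr ⟨ha, h3⟩
        · rintro (rfl | ⟨ha, h2⟩)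
          · exact ⟨h, le_refl _⟩
          · exact ⟨ha, by omega⟩
      rw [he, Finset.sum_insert (by simp only [hF, Finset.mem_filter]; omega)]
      simp [h]
    · have he : (descSet σ).filter (fun i => ¬ i < p) = F := by
        ext a
        simp only [hF, Finset.mem_filter, not_lt]
        constructor
        · rintro ⟨ha, h2⟩
          refine ⟨ha, ?_⟩
          rcases eq_or_lt_of_le h2 with h3 | h3
          · exact absurd (h3 ▸ ha) h
          · omega
        · rintro ⟨ha, h2⟩
          exact ⟨ha, by omega⟩
      rw [he]
      simp [h]
  have hdcard : dstat σ (p+1) = F.card := rfl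
  rw [mi, show p + 1 - 1 = p from rfl, hmajw, hmajσ, hdcard]
  by_cases h : p ∈ descSet σ <;> simp [h] <;> push_cast <;> ring
lemma dstat_succ (σ : List ℤ) (k : ℕ) :
    dstat σ k = dstat σ (k+1) + (if k ∈ descSet σ then 1 else 0) := by
  by_cases h : k ∈ descSet σ
  · have he : (descSet σ).filter (fun i => k ≤ i) =
        insert k ((descSet σ).filter (fun i => k + 1 ≤ i)) := by
      ext a
      simp only [Finset.mem_insert, Finset.mem_filter]
      constructor
      · rintro ⟨ha, h2⟩
        rcases eq_or_lt_of_le h2 with h3 | h3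
        · exact Or.inl h3.symm
        · exact Or.inr ⟨ha, h3⟩
      · rintro (rfl | ⟨ha, h2⟩)
        · exact ⟨h, le_refl _⟩
        · exact ⟨ha, by omega⟩
    rw [dstat, dstat, he, Finset.card_insert_of_notMem (by simp only [Finset.mem_filter]; omega)]
    simp [h]
  · have he : (descSet σ).filter (fun i => k ≤ i) = (descSet σ).filter (fun i => k + 1 ≤ i) := by
      ext a
      simp only [Finset.mem_filter]
      constructor
      · rintro ⟨ha, h2⟩
        refine ⟨ha, ?_⟩
        rcases eq_or_lt_of_le h2 with h3 | h3
        · exact absurd (h3 ▸ ha) h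
        · omega
      · rintro ⟨ha, h2⟩
        exact ⟨ha, by omega⟩
    rw [dstat, dstat, he]
    simp [h]

lemma zero_not_mem_descSet (σ : List ℤ) : 0 ∉ descSet σ := by
  simp [descSet]


/-- If r is greater than every letter of σ, then for 1 ≤ k ≤ n-1 the set of the first k
entries of MIS(σ,r) is the integer interval {dₖ(σ)+1, ..., dₖ(σ)+k}. -/
theorem mis_initial_segment_max (n : ℕ) (σ : List ℤ) (hnd : σ.Nodup)
    (hlen : σ.length + 1 = n) (r : ℤ) (hr : ∀ x ∈ σ, x < r)
    (k : ℕ) (hk1 : 1 ≤ k) (hk : k ≤ n - 1) :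
    (Finset.Icc 1 k).image (fun j => mi σ j r) =
      Finset.Icc ((dstat σ k : ℤ) + 1) ((dstat σ k : ℤ) + k) := by
  have hkσ : k ≤ σ.length := by omega
  clear hk hlen hnd
  induction k with
  | zero => omega
  | succ k ih =>
    rcases Nat.eq_zero_or_pos k with rfl | hk0
    · have hmi : mi σ 1 r = 1 + (dstat σ 1 : ℤ) := by
        have h := mi_formula σ r hr 0 (by omega)
        simp only [zero_not_mem_descSet σ, if_false, Nat.zero_add] at h
        rw [h]; ring
      simp only [Nat.zero_add]
      ext x
      simp only [Finset.mem_image, Finset.mem_Icc]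
      constructor
      · rintro ⟨j, hj, rfl⟩
        have : j = 1 := by omega
        subst this
        rw [hmi]; push_cast; omega
      · intro hx
        exact ⟨1, by omega, by rw [hmi]; push_cast; omega⟩
    · have ih' := ih hk0 (by omega)
      have hIcc : Finset.Icc 1 (k+1) = insert (k+1) (Finset.Icc 1 k) := by
        ext a; simp only [Finset.mem_insert, Finset.mem_Icc]; omega
      have hmi := mi_formula σ r hr k (by omega)
      have hds : (dstat σ k : ℤ) = (dstat σ (k+1) : ℤ) +
          (if k ∈ descSet σ then 1 else 0) := by
        rw [dstat_succ σ k]; push_cast; split_ifs <;> simp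
      rw [hIcc, Finset.image_insert, ih', hmi]
      ext x
      simp only [Finset.mem_insert, Finset.mem_Icc]
      by_cases h : k ∈ descSet σ <;>
        simp only [h, if_true, if_false] at hds ⊢ <;> push_cast <;> omega
end
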